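/- Let F be a field of characteristic 3 and let λ > 0 be a real number. Then the equation x³ − T^λ x − 1 = 0 has no solution x ∈ Λ_0^F. Consequently, for any field F of characteristic 3 the universal Novikov field Λ^F is not algebraically closed. -/

import Mathlib

noncomputable section

open scoped Classical Pointwise

/-- Auxiliary: the sum of two subsets of `ℝ` each of which meets every interval `(-∞, C]`
in a finite set again has this property. -/
theorem add_inter_Iic_finite {A B : Set ℝ}
    (hA : ∀ C : ℝ, (A ∩ Set.Iic C).Finite) (hB : ∀ C : ℝ, (B ∩ Set.Iic C).Finite) :
    ∀ C : ℝ, ((A + B) ∩ Set.Iic C).Finite := by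
  intro C
  rcases Set.eq_empty_or_nonempty A with hAe | ⟨a₀, ha₀⟩
  · simp [hAe]
  rcases Set.eq_empty_or_nonempty B with hBe | ⟨b₀, hb₀⟩
  · simp [hBe]
  obtain ⟨a₁, ha₁A, ha₁⟩ : ∃ a₁ ∈ A, ∀ a ∈ A, a₁ ≤ a := by
    obtain ⟨a₁, h₁, h₂⟩ := Set.exists_min_image _ id (hA a₀) ⟨a₀, ha₀, Set.self_mem_Iic⟩
    refine ⟨a₁, h₁.1, fun a ha => ?_⟩
    by_cases hle : a ≤ a₀
    · exact h₂ a ⟨ha, hle⟩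
    · exact le_trans (h₂ a₀ ⟨ha₀, Set.self_mem_Iic⟩) (le_of_not_ge hle)
  obtain ⟨b₁, hb₁B, hb₁⟩ : ∃ b₁ ∈ B, ∀ b ∈ B, b₁ ≤ b := by
    obtain ⟨b₁, h₁, h₂⟩ := Set.exists_min_image _ id (hB b₀) ⟨b₀, hb₀, Set.self_mem_Iic⟩
    refine ⟨b₁, h₁.1, fun b hb => ?_⟩
    by_cases hle : b ≤ b₀
    · exact h₂ b ⟨hb, hle⟩
    · exact le_trans (h₂ b₀ ⟨hb₀, Set.self_mem_Iic⟩) (le_of_not_ge hle)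
  have hsub : (A + B) ∩ Set.Iic C ⊆
      (fun p : ℝ × ℝ => p.1 + p.2) '' ((A ∩ Set.Iic (C - b₁)) ×ˢ (B ∩ Set.Iic (C - a₁))) := by
    rintro r ⟨hr, hrC⟩
    rw [Set.mem_add] at hr
    obtain ⟨a, ha, b, hb, rfl⟩ := hr
    have hC : a + b ≤ C := hrC
    exact ⟨(a, b), ⟨⟨ha, by have := hb₁ b hb; simp only [Set.mem_Iic]; linarith⟩,
      ⟨hb, by have := ha₁ a ha; simp only [Set.mem_Iic]; linarith⟩⟩, rfl⟩
  exact Set.Finite.subset (Set.Finite.image _ (Set.Finite.prod (hA _) (hB _))) hsub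

variable (F : Type*) [Field F]

/-- The universal Novikov field `Λ^F`: the subring of Hahn series over `ℝ` with coefficients
in `F` whose support meets every interval `(-∞, C]` in a finite set.  (Formal sums
`Σ aᵢ T^{λᵢ}` with `λᵢ → ∞`.) -/
def Novikov : Subring (HahnSeries ℝ F) where
  carrier := {s | ∀ C : ℝ, (s.support ∩ Set.Iic C).Finite}
  zero_mem' := by intro C; simp [HahnSeries.support_zero]
  one_mem' := by
    intro C
    refine Set.Finite.subset (Set.finite_singleton (0 : ℝ)) ?_
    intro r hr
    have h1 : (1 : HahnSeries ℝ F).coeff r ≠ 0 := hr.1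
    rw [HahnSeries.coeff_one] at h1
    by_contra hne
    simp only [Set.mem_singleton_iff] at hne
    simp [hne] at h1
  add_mem' := by
    intro a b ha hb C
    refine Set.Finite.subset ((ha C).union (hb C)) ?_
    intro r hr
    rcases HahnSeries.support_add_subset _ _ hr.1 with h | h
    · exact Or.inl ⟨h, hr.2⟩
    · exact Or.inr ⟨h, hr.2⟩
  neg_mem' := by
    intro a ha C
    refine Set.Finite.subset (ha C) ?_
    intro r hr
    rw [HahnSeries.support_neg] at hr
    exact hr
  mul_mem' := by
    intro a b ha hb C
    refine Set.Finite.subset (add_inter_Iic_finite ha hb C) ?_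
    intro r hr
    exact ⟨HahnSeries.support_mul_subset hr.1, hr.2⟩

/-- The element `T^c` of the universal Novikov field. -/
def NovikovT (c : ℝ) : Novikov F :=
  ⟨HahnSeries.single c 1, by
    intro C
    refine Set.Finite.subset (Set.finite_singleton c) ?_
    intro r hr
    exact HahnSeries.support_single_subset hr.1⟩

/-- The constant element `c·T^0` of the universal Novikov field. -/
def NovikovC (c : F) : Novikov F :=
  ⟨HahnSeries.single (0 : ℝ) c, by
    intro C
    refine Set.Finite.subset (Set.finite_singleton (0 : ℝ)) ?_
    intro r hr
    exact HahnSeries.support_single_subset hr.1⟩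

variable {F}

/-- Membership in `Λ₀^F ⊆ Λ^F`: all exponents are `≥ 0`. -/
def MemLambda0 (x : Novikov F) : Prop :=
  ∀ r : ℝ, r < 0 → (x : HahnSeries ℝ F).coeff r = 0

/-- Membership in `Λ₊^F ⊆ Λ₀^F`: all exponents are `> 0`. -/
def MemLambdaPlus (x : Novikov F) : Prop :=
  ∀ r : ℝ, r ≤ 0 → (x : HahnSeries ℝ F).coeff r = 0




section Aux
open HahnSeries
variable {F : Type*} [Field F]


lemma mulCoeffZero {u v : HahnSeries ℝ F}
    (hu : u.support ⊆ Set.Ici 0) (hv : v.support ⊆ Set.Ici 0) :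
    (u * v).coeff 0 = u.coeff 0 * v.coeff 0 := by
  rcases eq_or_ne u 0 with rfl | hu0; · simp
  rcases eq_or_ne v 0 with rfl | hv0; · simp
  have hou : (0:ℝ) ≤ u.order := hu (coeff_order_eq_zero.not.mpr hu0)
  have hov : (0:ℝ) ≤ v.order := hv (coeff_order_eq_zero.not.mpr hv0)
  rcases hou.eq_or_lt with h | h
  · rcases hov.eq_or_lt with h' | h'
    · have := coeff_mul_order_add_order u v
      rw [leadingCoeff_eq, leadingCoeff_eq, ← h, ← h', add_zero] at this
      exact this
    · rw [coeff_eq_zero_of_lt_order h', mul_zero]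
      refine coeff_eq_zero_of_lt_order ?_
      rw [order_mul hu0 hv0, ← h, zero_add]
      exact h'
  · rw [coeff_eq_zero_of_lt_order h, zero_mul]
    refine coeff_eq_zero_of_lt_order ?_
    rw [order_mul hu0 hv0]
    linarith

lemma cubeCoeffZero {u : HahnSeries ℝ F} (hu : u.support ⊆ Set.Ici 0) :
    (u ^ 3).coeff 0 = (u.coeff 0) ^ 3 := by
  have h2 : (u * u).support ⊆ Set.Ici 0 := by
    refine subset_trans support_mul_subset ?_
    rintro r ⟨a, ha, b, hb, rfl⟩
    exact Set.mem_Ici.mpr (add_nonneg (Set.mem_Ici.mp (hu ha)) (Set.mem_Ici.mp (hu hb)))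
  have : u ^ 3 = (u * u) * u := by ring
  rw [this, mulCoeffZero h2 hu, mulCoeffZero hu hu]
  ring

lemma cubeRootOne [CharP F 3] {a : F} (ha : a ^ 3 = 1) : a = 1 := by
  haveI : Fact (Nat.Prime 3) := ⟨by norm_num⟩
  have h : (a - 1) ^ 3 = 0 := by
    rw [sub_pow_char (p := 3), ha, one_pow, sub_self]
  have := pow_eq_zero_iff (n := 3) (by norm_num) |>.mp h
  exact sub_eq_zero.mp this

lemma unitCoeff [CharP F 3] {μ : ℝ} (hμ : 0 < μ) {u : HahnSeries ℝ F}
    (hsupp : u.support ⊆ Set.Ici 0) (hequ : u ^ 3 = 1 + single μ 1 * u) :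
    u.coeff 0 = 1 := by
  apply cubeRootOne
  rw [← cubeCoeffZero hsupp, hequ, coeff_add]
  have h1 : (single μ (1:F) * u).coeff 0 = 0 := by
    have harg : (0:ℝ) = -μ + μ := by ring
    rw [harg, coeff_single_mul_add, one_mul]
    by_contra hc
    have : (-μ : ℝ) ∈ u.support := hc
    have := hsupp this
    simp only [Set.mem_Ici] at this
    linarith
  rw [h1, add_zero, coeff_one, if_pos rfl]

lemma stepLemma [CharP F 3] {μ : ℝ} (hμ : 0 < μ) {u : HahnSeries ℝ F}
    (hsupp : u.support ⊆ Set.Ici 0) (hequ : u ^ 3 = 1 + single μ 1 * u) :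
    ∃ v : HahnSeries ℝ F, v.support ⊆ Set.Ici 0 ∧ v ^ 3 = 1 + single (μ/3) 1 * v ∧
      ∀ t : ℝ, μ/3 ≤ t → u.coeff t = v.coeff (t - μ/3) := by
  haveI : Fact (Nat.Prime 3) := ⟨by norm_num⟩
  haveI : CharP (HahnSeries ℝ F) 3 :=
    charP_of_injective_ringHom (HahnSeries.C_injective (Γ := ℝ) (R := F)) 3
  have h0 : u.coeff 0 = 1 := unitCoeff hμ hsupp hequ
  have hu0 : u ≠ 0 := by
    intro h; rw [h] at h0; simp at h0
  have hord : u.order = 0 := by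
    refine le_antisymm (order_le_of_coeff_ne_zero ?_) (hsupp (coeff_order_eq_zero.not.mpr hu0))
    rw [h0]; exact one_ne_zero
  set w : HahnSeries ℝ F := u - 1 with hw
  have hw3 : w ^ 3 = single μ 1 * u := by
    rw [hw, sub_pow_char (p := 3), hequ, one_pow]
    ring
  have hwne : w ≠ 0 := by
    intro h
    rw [h] at hw3
    exact (mul_ne_zero (single_ne_zero (one_ne_zero)) hu0) (by
      rw [← hw3]; ring)
  have hordw : w.order = μ / 3 := by
    have h1 : (w ^ 3).order = 3 • w.order := order_pow w 3
    have h2 : (single μ (1:F) * u).order = μ := by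
      rw [order_mul (single_ne_zero one_ne_zero) hu0, order_single one_ne_zero, hord, add_zero]
    rw [hw3, h2, nsmul_eq_mul] at h1
    push_cast at h1
    linarith
  set v : HahnSeries ℝ F := single (-(μ/3)) 1 * w with hv
  have hwcoeff : ∀ r : ℝ, v.coeff r = w.coeff (r + μ/3) := by
    intro r
    have := coeff_single_mul_add (r := (1:F)) (x := w) (a := r + μ/3) (b := -(μ/3))
    have harg : r + μ/3 + -(μ/3) = r := by ring
    rw [harg, one_mul] at this
    exact this
  have hvsupp : v.support ⊆ Set.Ici 0 := by
    intro r hr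
    have : w.coeff (r + μ/3) ≠ 0 := by rw [← hwcoeff]; exact hr
    have := order_le_of_coeff_ne_zero this
    rw [hordw] at this
    simp only [Set.mem_Ici]
    linarith
  have hwv : single (μ/3) 1 * v = w := by
    rw [hv, ← mul_assoc, single_mul_single, mul_one]
    have : μ/3 + -(μ/3) = (0:ℝ) := by ring
    rw [this, single_zero_one, one_mul]
  have hv3 : v ^ 3 = 1 + single (μ/3) 1 * v := by
    rw [hwv, hv, mul_pow, single_pow, one_pow, hw3, ← mul_assoc, single_mul_single, one_mul]
    have : (3:ℕ) • (-(μ/3)) + μ = (0:ℝ) := by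
      rw [nsmul_eq_mul]; push_cast; ring
    rw [this, single_zero_one, one_mul, hw]
    ring
  refine ⟨v, hvsupp, hv3, fun t ht => ?_⟩
  have h1 : u.coeff t = w.coeff t + (1 : HahnSeries ℝ F).coeff t := by
    rw [hw, coeff_sub]; ring
  have h2 : (1 : HahnSeries ℝ F).coeff t = 0 := by
    rw [coeff_one, if_neg]; intro h; rw [h] at ht; linarith
  have h3 : w.coeff t = v.coeff (t - μ/3) := by
    rw [hwcoeff]; congr 1; ring
  rw [h1, h2, h3, add_zero]

lemma keyLemma [CharP F 3] {lam : ℝ} (hlam : 0 < lam) (x : HahnSeries ℝ F)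
    (hfin : ∀ C : ℝ, (x.support ∩ Set.Iic C).Finite) :
    x ^ 3 ≠ 1 + single lam 1 * x := by
  intro heq
  have hx0 : x ≠ 0 := by
    intro h
    rw [h, mul_zero, add_zero] at heq
    simp at heq
  -- Step 1: support ⊆ Ici 0
  have hordnn : (0:ℝ) ≤ x.order := by
    by_contra hneg
    push_neg at hneg
    have h1 : (x ^ 3).coeff (3 * x.order) ≠ 0 := by
      have := coeff_order_eq_zero.not.mpr (pow_ne_zero 3 hx0)
      rwa [order_pow, nsmul_eq_mul, Nat.cast_ofNat] at this
    apply h1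
    rw [heq, coeff_add]
    have h2 : (1 : HahnSeries ℝ F).coeff (3 * x.order) = 0 := by
      rw [coeff_one, if_neg]; intro h; linarith
    have h3 : (single lam (1:F) * x).coeff (3 * x.order) = 0 := by
      have := coeff_single_mul_add (r := (1:F)) (x := x) (a := 3 * x.order - lam) (b := lam)
      have harg : 3 * x.order - lam + lam = 3 * x.order := by ring
      rw [harg, one_mul] at this
      rw [this]
      exact coeff_eq_zero_of_lt_order (by linarith)
    rw [h2, h3, add_zero]
  have hsupp : x.support ⊆ Set.Ici 0 := fun r hr =>
    le_trans hordnn (order_le_of_coeff_ne_zero hr)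
  -- the exponent sequence
  set s : ℕ → ℝ := fun n => lam / 2 * (1 - (1/3 : ℝ) ^ n) with hs
  have hP : ∀ n : ℕ, ∃ u : HahnSeries ℝ F, u.support ⊆ Set.Ici 0 ∧
      u ^ 3 = 1 + single (lam / 3 ^ n) 1 * u ∧
      ∀ t : ℝ, s n ≤ t → x.coeff t = u.coeff (t - s n) := by
    intro n
    induction n with
    | zero =>
      refine ⟨x, hsupp, by simpa using heq, fun t _ => by simp [hs]⟩
    | succ n ih =>
      obtain ⟨u, hu1, hu2, hu3⟩ := ih
      have hμ : 0 < lam / 3 ^ n := by positivity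
      obtain ⟨v, hv1, hv2, hv3⟩ := stepLemma hμ hu1 hu2
      have hdiv : lam / 3 ^ n / 3 = lam / 3 ^ (n + 1) := by
        rw [pow_succ]; ring
      have hsn : s (n + 1) = s n + lam / 3 ^ (n + 1) := by
        simp only [hs]
        rw [pow_succ]
        field_simp
        have h3 : (1/3:ℝ)^n * 3^n = 1 := by rw [← mul_pow]; norm_num
        linear_combination 6 * h3
      refine ⟨v, hv1, by rwa [hdiv] at hv2, fun t ht => ?_⟩
      have ht' : s n ≤ t := by
        have : 0 < lam / 3 ^ (n+1) := by positivity
        rw [hsn] at ht; linarith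
      rw [hu3 t ht', hv3 (t - s n) (by rw [hsn] at ht; linarith), hdiv]
      congr 1
      rw [hsn]; ring
  have hmem : ∀ n : ℕ, s n ∈ x.support ∩ Set.Iic lam := by
    intro n
    obtain ⟨u, hu1, hu2, hu3⟩ := hP n
    have hμ : 0 < lam / 3 ^ n := by positivity
    have h1 : x.coeff (s n) = 1 := by
      rw [hu3 (s n) le_rfl, sub_self]
      exact unitCoeff hμ hu1 hu2
    constructor
    · show x.coeff (s n) ≠ 0
      rw [h1]; exact one_ne_zero
    · have h3 : (0:ℝ) ≤ (1/3 : ℝ) ^ n := by positivity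
      simp only [hs, Set.mem_Iic]
      nlinarith
  have hinj : Function.Injective s := by
    have : StrictMono s := by
      apply strictMono_nat_of_lt_succ
      intro n
      simp only [hs]
      have h1 : (1/3 : ℝ) ^ (n+1) < (1/3 : ℝ) ^ n := by
        apply pow_lt_pow_right_of_lt_one₀ <;> norm_num
      nlinarith
    exact this.injective
  exact (Set.infinite_of_injective_forall_mem hinj hmem) (hfin lam)

end Aux

set_option maxHeartbeats 1000000 in
/-- **Statement 2** (Lemma 10.18 and Example 10.17 of Fukaya–Oh–Ohta–Ono, *Lagrangian Floer
theory on compact toric manifolds I*).  Let `F` be a field of characteristic `3` and `λ > 0`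
a real number.  Then the equation `x³ - T^λ x - 1 = 0` has no solution `x ∈ Λ₀^F`.
Consequently the universal Novikov field `Λ^F` is not algebraically closed: some
nonconstant polynomial over `Λ^F` has no root in `Λ^F`. -/
theorem novikov_char_three_not_algClosed
    (F : Type*) [Field F] [CharP F 3] (lam : ℝ) (hlam : 0 < lam) :
    (¬ ∃ x : Novikov F, MemLambda0 x ∧ x ^ 3 - NovikovT F lam * x - 1 = 0) ∧
    ∃ p : Polynomial (Novikov F), 1 ≤ p.degree ∧ ∀ x : Novikov F, Polynomial.eval x p ≠ 0 := by
  haveI : Nontrivial (Novikov F) :=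
    ⟨0, 1, fun h => zero_ne_one (congrArg Subtype.val h : (0 : HahnSeries ℝ F) = 1)⟩
  have hroot : ∀ x : Novikov F, x ^ 3 - NovikovT F lam * x - 1 ≠ 0 := by
    intro x hx
    have hT : ((NovikovT F lam : Novikov F) : HahnSeries ℝ F) = HahnSeries.single lam 1 := rfl
    have h1 : ((x ^ 3 - NovikovT F lam * x - 1 : Novikov F) : HahnSeries ℝ F) = 0 :=
      congrArg Subtype.val hx
    push_cast at h1
    rw [hT] at h1
    have hx' : (x : HahnSeries ℝ F) ^ 3 =
        1 + HahnSeries.single lam 1 * (x : HahnSeries ℝ F) := by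
      linear_combination h1
    exact keyLemma hlam (x : HahnSeries ℝ F) x.2 hx'
  constructor
  · rintro ⟨x, -, hx⟩
    exact hroot x hx
  · refine ⟨Polynomial.X ^ 3 - Polynomial.C (NovikovT F lam) * Polynomial.X - 1, ?_, ?_⟩
    · have hdeg : (Polynomial.X ^ 3 - Polynomial.C (NovikovT F lam) * Polynomial.X - 1 :
          Polynomial (Novikov F)).degree = 3 := by
        compute_degree
        · intro h
          exact zero_ne_one (congrArg Subtype.val h).symm
        · exact le_rfl
        · decide
      rw [hdeg]
      decide
    · intro x
      simp only [Polynomial.eval_sub, Polynomial.eval_pow, Polynomial.eval_mul,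
        Polynomial.eval_one, Polynomial.eval_X, Polynomial.eval_C]
      exact hroot x
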